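/- Let π : R → S be an epimorphism of unital rings and let rk_R be an extended Sylvester map rank function for R satisfying rk_R(π) = rk_R(id_S) = 1 (viewing π : R → S and id_S as R-module maps). Then rk_R(id_S ⊗_R id_M) = rk_R(id_M) for every finitely presented R-module M. -/

import Mathlib

universe u
open scoped NNReal ENNReal

/-- An extended Sylvester map rank function for a unital ring `R`: an `ℝ≥0∞`-valued function
on all maps between left `R`-modules, satisfying normalization, submultiplicativity,
direct sum additivity, two continuity conditions with respect to direct limits, and
additivity `rk(id_{M₂}) = rk(α) + rk(id_{coker α})`. -/
structure ExtendedSylvesterMapRank (R : Type u) [Ring R] where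
  r : ∀ {M N : Type u} [AddCommGroup M] [Module R M] [AddCommGroup N] [Module R N],
      (M →ₗ[R] N) → ℝ≥0∞
  r_zero : ∀ (M N : Type u) [AddCommGroup M] [Module R M] [AddCommGroup N] [Module R N],
      r (0 : M →ₗ[R] N) = 0
  r_id_ring : r (LinearMap.id : R →ₗ[R] R) = 1
  r_comp : ∀ {M N P : Type u} [AddCommGroup M] [Module R M] [AddCommGroup N] [Module R N]
      [AddCommGroup P] [Module R P] (α : M →ₗ[R] N) (β : N →ₗ[R] P),
      r (β.comp α) ≤ min (r α) (r β)
  r_prodMap : ∀ {M N P Q : Type u} [AddCommGroup M] [Module R M] [AddCommGroup N] [Module R N]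
      [AddCommGroup P] [Module R P] [AddCommGroup Q] [Module R Q]
      (α : M →ₗ[R] N) (β : P →ₗ[R] Q),
      r (α.prodMap β) = r α + r β
  continuity_from : ∀ (J : Type u) [Preorder J] [IsDirected J (· ≤ ·)] [Nonempty J]
      [DecidableEq J] (G : J → Type u) [∀ j, AddCommGroup (G j)] [∀ j, Module R (G j)]
      (f : ∀ i j, i ≤ j → G i →ₗ[R] G j) [DirectedSystem G (fun i j h => f i j h)]
      (M : Type u) [AddCommGroup M] [Module R M]
      (α : ∀ j, G j →ₗ[R] M) (αlim : Module.DirectLimit G f →ₗ[R] M),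
      (∀ (i j : J) (h : i ≤ j), (α j).comp (f i j h) = α i) →
      (∀ j : J, αlim.comp (Module.DirectLimit.of R J G f j) = α j) →
      Filter.Tendsto (fun j => r (α j)) Filter.atTop (nhds (r αlim))
  continuity_to : ∀ (J : Type u) [Preorder J] [IsDirected J (· ≤ ·)] [Nonempty J]
      [DecidableEq J] (G : J → Type u) [∀ j, AddCommGroup (G j)] [∀ j, Module R (G j)]
      (f : ∀ i j, i ≤ j → G i →ₗ[R] G j) [DirectedSystem G (fun i j h => f i j h)]
      (M : Type u) [AddCommGroup M] [Module R M], Module.Finite R M →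
      ∀ (α : ∀ j, M →ₗ[R] G j) (αlim : M →ₗ[R] Module.DirectLimit G f),
      (∀ (i j : J) (h : i ≤ j), (f i j h).comp (α i) = α j) →
      (∀ j : J, (Module.DirectLimit.of R J G f j).comp (α j) = αlim) →
      Filter.Tendsto (fun j => r (α j)) Filter.atTop (nhds (r αlim))
  additivity : ∀ {M N : Type u} [AddCommGroup M] [Module R M] [AddCommGroup N] [Module R N]
      (α : M →ₗ[R] N),
      r (LinearMap.id : N →ₗ[R] N) =
        r α + r (LinearMap.id : (N ⧸ LinearMap.range α) →ₗ[R] (N ⧸ LinearMap.range α))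

/-- The cokernel of the matrix `A.map π` over `S`, i.e. `S ⊗_R M` for the finitely
presented `R`-module `M` presented by the matrix `A`. -/
abbrev MatrixCokernel (S : Type u) [Ring S] {n m : ℕ} (B : Matrix (Fin n) (Fin m) S) :
    Type u :=
  (Fin m → S) ⧸ LinearMap.range B.vecMulLinear

def piFinSuccLinearEquiv (R : Type u) [Ring R] (X : Type u) [AddCommGroup X] [Module R X]
    (k : ℕ) : (Fin (k+1) → X) ≃ₗ[R] X × (Fin k → X) :=
  LinearEquiv.ofLinear
    (LinearMap.prod (LinearMap.proj 0) (LinearMap.pi fun i => LinearMap.proj i.succ))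
    (LinearMap.pi (fun i : Fin (k+1) => Fin.cases (LinearMap.fst R X (Fin k → X))
      (fun j => (LinearMap.proj j).comp (LinearMap.snd R X (Fin k → X))) i))
    (by apply LinearMap.ext; intro p; ext <;> simp)
    (by apply LinearMap.ext; intro x; funext i; refine Fin.cases ?_ ?_ i <;> simp)

namespace ExtendedSylvesterMapRank
variable {R : Type u} [Ring R] (rk : ExtendedSylvesterMapRank R)

section basic
variable {M N P : Type u} [AddCommGroup M] [Module R M] [AddCommGroup N] [Module R N]
  [AddCommGroup P] [Module R P]

lemma r_comp_le_left (α : M →ₗ[R] N) (β : N →ₗ[R] P) : rk.r (β.comp α) ≤ rk.r α :=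
  (rk.r_comp α β).trans (min_le_left _ _)

lemma r_comp_le_right (α : M →ₗ[R] N) (β : N →ₗ[R] P) : rk.r (β.comp α) ≤ rk.r β :=
  (rk.r_comp α β).trans (min_le_right _ _)

lemma r_le_id_dom (α : M →ₗ[R] N) : rk.r α ≤ rk.r (LinearMap.id : M →ₗ[R] M) := by
  have := rk.r_comp_le_left (LinearMap.id : M →ₗ[R] M) α
  rwa [LinearMap.comp_id] at this

lemma r_le_id_cod (α : M →ₗ[R] N) : rk.r α ≤ rk.r (LinearMap.id : N →ₗ[R] N) := by
  have := rk.r_comp_le_right α (LinearMap.id : N →ₗ[R] N)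
  rwa [LinearMap.id_comp] at this

lemma r_id_congr (e : M ≃ₗ[R] N) :
    rk.r (LinearMap.id : N →ₗ[R] N) = rk.r (LinearMap.id : M →ₗ[R] M) := by
  have key : ∀ {A B : Type u} [AddCommGroup A] [Module R A] [AddCommGroup B] [Module R B]
      (f : A ≃ₗ[R] B), rk.r (LinearMap.id : B →ₗ[R] B) ≤ rk.r (LinearMap.id : A →ₗ[R] A) := by
    intro A B _ _ _ _ f
    have h1 : (LinearMap.id : B →ₗ[R] B) = f.toLinearMap.comp f.symm.toLinearMap := by
      ext x; simp
    rw [h1]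
    exact (rk.r_comp_le_left _ _).trans (rk.r_le_id_cod _)
  exact le_antisymm (key e) (key e.symm)

lemma r_id_zero_of_subsingleton (h : Subsingleton N) :
    rk.r (LinearMap.id : N →ₗ[R] N) = 0 := by
  have : (LinearMap.id : N →ₗ[R] N) = 0 := Subsingleton.elim _ _
  rw [this, rk.r_zero]

lemma r_id_eq_of_surjective (β : M →ₗ[R] N) (h : Function.Surjective β) :
    rk.r (LinearMap.id : N →ₗ[R] N) = rk.r β := by
  have h2 := rk.additivity β
  have h3 : Subsingleton (N ⧸ LinearMap.range β) :=
    Submodule.Quotient.subsingleton_iff.mpr (LinearMap.range_eq_top.mpr h)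
  rw [rk.r_id_zero_of_subsingleton h3, add_zero] at h2
  exact h2

end basic

lemma r_id_pi (X : Type u) [AddCommGroup X] [Module R X] (k : ℕ) :
    rk.r (LinearMap.id : (Fin k → X) →ₗ[R] (Fin k → X)) =
      (k : ℝ≥0∞) * rk.r (LinearMap.id : X →ₗ[R] X) := by
  induction k with
  | zero =>
      rw [rk.r_id_zero_of_subsingleton (by infer_instance)]
      simp
  | succ k ih =>
      rw [rk.r_id_congr (piFinSuccLinearEquiv R X k).symm]
      have : (LinearMap.id : (X × (Fin k → X)) →ₗ[R] (X × (Fin k → X))) =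
          (LinearMap.id : X →ₗ[R] X).prodMap (LinearMap.id : (Fin k → X) →ₗ[R] (Fin k → X)) := by
        ext <;> simp
      rw [this, rk.r_prodMap, ih, Nat.cast_succ, add_mul, one_mul, add_comm]

lemma r_eq_zero_of_comp_eq_zero {V W U : Type u} [AddCommGroup V] [Module R V]
    [AddCommGroup W] [Module R W] [AddCommGroup U] [Module R U]
    (p : V →ₗ[R] W) (β : W →ₗ[R] U)
    (h0 : rk.r (LinearMap.id :
        (W ⧸ LinearMap.range p) →ₗ[R] (W ⧸ LinearMap.range p)) = 0)
    (hβ : β.comp p = 0) : rk.r β = 0 := by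
  have hle : LinearMap.range p ≤ LinearMap.ker β := by
    rintro x ⟨v, rfl⟩
    exact LinearMap.mem_ker.mpr (LinearMap.congr_fun hβ v)
  have hβ' : β = (Submodule.liftQ _ β hle).comp (LinearMap.range p).mkQ :=
    (Submodule.liftQ_mkQ _ _ _).symm
  refine le_antisymm ?_ zero_le
  calc rk.r β ≤ rk.r (Submodule.liftQ _ β hle) := by
        conv_lhs => rw [hβ']
        exact rk.r_comp_le_right _ _
    _ ≤ rk.r (LinearMap.id : (W ⧸ LinearMap.range p) →ₗ[R] (W ⧸ LinearMap.range p)) :=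
        rk.r_le_id_dom _
    _ = 0 := h0

end ExtendedSylvesterMapRank

open ExtendedSylvesterMapRank in
lemma sylvester_key {R : Type u} [Ring R] (rk : ExtendedSylvesterMapRank R)
    (S : Type u) [AddCommGroup S] [Module R S]
    (πL : R →ₗ[R] S) (hπ : rk.r πL = 1)
    (hid : rk.r (LinearMap.id : S →ₗ[R] S) = 1)
    (n m : ℕ)
    (AR : (Fin n → R) →ₗ[R] (Fin m → R))
    (AS : (Fin n → S) →ₗ[R] (Fin m → S))
    (hcomm : AS.comp (LinearMap.pi fun i => πL.comp (LinearMap.proj i)) =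
      (LinearMap.pi fun i => πL.comp (LinearMap.proj i)).comp AR) :
    rk.r (LinearMap.id : ((Fin m → S) ⧸ LinearMap.range AS) →ₗ[R]
        ((Fin m → S) ⧸ LinearMap.range AS)) =
      rk.r (LinearMap.id : ((Fin m → R) ⧸ LinearMap.range AR) →ₗ[R]
        ((Fin m → R) ⧸ LinearMap.range AR)) := by
  classical
  set Pk : ∀ k : ℕ, (Fin k → R) →ₗ[R] (Fin k → S) :=
    fun k => LinearMap.pi (fun i => πL.comp (LinearMap.proj i)) with hPk
  -- rank of id on S ⧸ range πL is zero
  have hQ : rk.r (LinearMap.id : (S ⧸ LinearMap.range πL) →ₗ[R]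
      (S ⧸ LinearMap.range πL)) = 0 := by
    have h := rk.additivity πL
    rw [hid, hπ] at h
    have h' : (1 : ℝ≥0∞) + rk.r (LinearMap.id : (S ⧸ LinearMap.range πL) →ₗ[R]
        (S ⧸ LinearMap.range πL)) = 1 + 0 := by
      rw [add_zero]; exact h.symm
    exact (ENNReal.add_right_inj (by norm_num)).mp h'
  -- rank of id on (Fin k → S) ⧸ range (Pk k) is zero
  have hQk : ∀ k : ℕ, rk.r (LinearMap.id :
      ((Fin k → S) ⧸ LinearMap.range (Pk k)) →ₗ[R]
      ((Fin k → S) ⧸ LinearMap.range (Pk k))) = 0 := by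
    intro k
    set F : (Fin k → S) →ₗ[R] (Fin k → (S ⧸ LinearMap.range πL)) :=
      LinearMap.pi (fun i => (LinearMap.range πL).mkQ.comp (LinearMap.proj i)) with hF
    have hker : LinearMap.range (Pk k) ≤ LinearMap.ker F := by
      rintro x ⟨y, rfl⟩
      refine LinearMap.mem_ker.mpr (funext fun i => ?_)
      show Submodule.Quotient.mk (πL (y i)) = (0 : S ⧸ LinearMap.range πL)
      rw [Submodule.Quotient.mk_eq_zero]
      exact ⟨y i, rfl⟩
    have hkerF : LinearMap.ker F ≤ LinearMap.range (Pk k) := by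
      intro x hx
      have hx' : ∀ i, x i ∈ LinearMap.range πL := by
        intro i
        have h2 : Submodule.Quotient.mk (x i) = (0 : S ⧸ LinearMap.range πL) :=
          congrFun (LinearMap.mem_ker.mp hx) i
        rwa [Submodule.Quotient.mk_eq_zero] at h2
      choose y hy using hx'
      exact ⟨y, funext fun i => hy i⟩
    have hFsurj : Function.Surjective F := by
      intro q
      choose x hx using fun i => (LinearMap.range πL).mkQ_surjective (q i)
      exact ⟨x, funext hx⟩
    have hsurj : Function.Surjective (Submodule.liftQ (LinearMap.range (Pk k)) F hker) := by
      intro q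
      obtain ⟨x, hx⟩ := hFsurj q
      exact ⟨Submodule.Quotient.mk x, by rwa [Submodule.liftQ_apply]⟩
    have e2 : ((Fin k → S) ⧸ LinearMap.range (Pk k)) ≃ₗ[R]
        (Fin k → (S ⧸ LinearMap.range πL)) :=
      LinearEquiv.ofBijective (Submodule.liftQ (LinearMap.range (Pk k)) F hker)
        ⟨LinearMap.ker_eq_bot.mp (Submodule.ker_liftQ_eq_bot _ _ _ hkerF), hsurj⟩
    rw [rk.r_id_congr e2.symm, rk.r_id_pi, hQ, mul_zero]
  -- the composite map φ
  set φ : (Fin n → R) →ₗ[R] (Fin m → S) := (Pk m).comp AR with hφdef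
  have hφ2 : AS.comp (Pk n) = φ := hcomm
  -- additivity identities
  have hb := rk.additivity AR
  rw [rk.r_id_pi, rk.r_id_ring, mul_one] at hb
  have hc := rk.additivity φ
  rw [rk.r_id_pi, hid, mul_one] at hc
  -- the induced map ρ on quotients
  have hle : LinearMap.range AR ≤ (LinearMap.range φ).comap (Pk m) := by
    rintro x ⟨v, rfl⟩
    exact ⟨v, rfl⟩
  set ρ : ((Fin m → R) ⧸ LinearMap.range AR) →ₗ[R] ((Fin m → S) ⧸ LinearMap.range φ) :=
    Submodule.mapQ _ _ (Pk m) hle with hρdef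
  have hgρ := rk.additivity ρ
  -- r id on coker ρ is zero
  have z0 : rk.r (LinearMap.id :
      ((((Fin m → S) ⧸ LinearMap.range φ) ⧸ LinearMap.range ρ)) →ₗ[R]
      ((((Fin m → S) ⧸ LinearMap.range φ) ⧸ LinearMap.range ρ))) = 0 := by
    set β := (LinearMap.range ρ).mkQ.comp (LinearMap.range φ).mkQ with hβdef
    have surjβ : Function.Surjective β :=
      (LinearMap.range ρ).mkQ_surjective.comp (LinearMap.range φ).mkQ_surjective
    have hβ0 : β.comp (Pk m) = 0 := by
      apply LinearMap.ext; intro x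
      have h1 : (LinearMap.range φ).mkQ (Pk m x) = ρ ((LinearMap.range AR).mkQ x) := by
        simp [hρdef, Submodule.mkQ_apply, Submodule.mapQ_apply]
      show (LinearMap.range ρ).mkQ ((LinearMap.range φ).mkQ (Pk m x)) = 0
      rw [h1]
      rw [Submodule.mkQ_apply, Submodule.Quotient.mk_eq_zero]
      exact ⟨(LinearMap.range AR).mkQ x, rfl⟩
    rw [rk.r_id_eq_of_surjective β surjβ]
    exact rk.r_eq_zero_of_comp_eq_zero (Pk m) β (hQk m) hβ0
  rw [z0, add_zero] at hgρ
  -- c_φ ≤ c_M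
  have hg' : rk.r (LinearMap.id : ((Fin m → S) ⧸ LinearMap.range φ) →ₗ[R]
      ((Fin m → S) ⧸ LinearMap.range φ)) ≤
      rk.r (LinearMap.id : ((Fin m → R) ⧸ LinearMap.range AR) →ₗ[R]
      ((Fin m → R) ⧸ LinearMap.range AR)) := by
    rw [hgρ]; exact rk.r_le_id_dom ρ
  -- the map α with r α = 0, whose cokernel is coker AS
  set α : (Fin n → S) →ₗ[R] ((Fin m → S) ⧸ LinearMap.range φ) :=
    (LinearMap.range φ).mkQ.comp AS with hαdef
  have hα0 : α.comp (Pk n) = 0 := by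
    apply LinearMap.ext; intro x
    show (LinearMap.range φ).mkQ (AS (Pk n x)) = 0
    have hx : AS (Pk n x) = φ x := LinearMap.congr_fun hφ2 x
    rw [hx]
    rw [Submodule.mkQ_apply, Submodule.Quotient.mk_eq_zero]
    exact ⟨x, rfl⟩
  have hαr : rk.r α = 0 := rk.r_eq_zero_of_comp_eq_zero (Pk n) α (hQk n) hα0
  have hle2 : LinearMap.range φ ≤ LinearMap.range AS := by
    rintro x ⟨v, rfl⟩
    exact ⟨Pk n v, LinearMap.congr_fun hφ2 v⟩
  have hrangeα : LinearMap.range α =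
      Submodule.map (LinearMap.range φ).mkQ (LinearMap.range AS) := by
    rw [hαdef]; exact LinearMap.range_comp _ _
  have e3 : ((((Fin m → S) ⧸ LinearMap.range φ)) ⧸ LinearMap.range α) ≃ₗ[R]
      ((Fin m → S) ⧸ LinearMap.range AS) :=
    (Submodule.quotEquivOfEq _ _ hrangeα).trans
      (Submodule.quotientQuotientEquivQuotient _ _ hle2)
  have hi : rk.r (LinearMap.id : ((Fin m → S) ⧸ LinearMap.range φ) →ₗ[R]
      ((Fin m → S) ⧸ LinearMap.range φ)) =
      rk.r (LinearMap.id : ((Fin m → S) ⧸ LinearMap.range AS) →ₗ[R]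
      ((Fin m → S) ⧸ LinearMap.range AS)) := by
    have h4 := rk.additivity α
    rw [hαr, zero_add] at h4
    exact h4.trans (rk.r_id_congr e3.symm)
  -- hi : c_φ = c_S
  -- now the ENNReal arithmetic
  have h1 : rk.r AR + rk.r (LinearMap.id : ((Fin m → R) ⧸ LinearMap.range AR) →ₗ[R]
      ((Fin m → R) ⧸ LinearMap.range AR)) = rk.r φ +
      rk.r (LinearMap.id : ((Fin m → S) ⧸ LinearMap.range φ) →ₗ[R]
      ((Fin m → S) ⧸ LinearMap.range φ)) := hb.symm.trans hc
  have hφle : rk.r φ ≤ rk.r AR := by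
    rw [hφdef]; exact rk.r_comp_le_left AR (Pk m)
  have hARne : rk.r AR ≠ ⊤ := by
    have hle3 : rk.r AR ≤ (m : ℝ≥0∞) := hb ▸ le_self_add
    exact ne_top_of_le_ne_top (ENNReal.natCast_ne_top m) hle3
  have hMle : rk.r (LinearMap.id : ((Fin m → R) ⧸ LinearMap.range AR) →ₗ[R]
      ((Fin m → R) ⧸ LinearMap.range AR)) ≤
      rk.r (LinearMap.id : ((Fin m → S) ⧸ LinearMap.range φ) →ₗ[R]
      ((Fin m → S) ⧸ LinearMap.range φ)) := by
    refine (ENNReal.add_le_add_iff_left hARne).mp ?_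
    calc rk.r AR + _ = rk.r φ + _ := h1
      _ ≤ rk.r AR + _ := add_le_add hφle le_rfl
  exact hi.symm.trans (le_antisymm hg' hMle)

/-- Let `π : R → S` be an epimorphism of unital rings and `rk_R` an
extended Sylvester map rank function for `R` with `rk_R(π) = rk_R(id_S) = 1`, viewing `π`
and `id_S` as maps of `R`-modules (`S` is an `R`-module via `π`). Then
`rk_R(id_{S ⊗_R M}) = rk_R(id_M)` for every finitely presented `R`-module `M`; here for
`M` presented by a matrix `A` (i.e. `M ≅ R^m / R^n A`), the module `S ⊗_R M` is presented
over `S` by the matrix `π(A)`, viewed as an `R`-module via `π`. -/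
theorem extendedSylvesterMapRank_of_rank_pi_eq_one (R S : Type u) [Ring R] [Ring S]
    (π : R →+* S)
    (hepi : ∀ (T : Type u) [Ring T] (a b : S →+* T), a.comp π = b.comp π → a = b)
    (rkR : ExtendedSylvesterMapRank R)
    (hπ : @ExtendedSylvesterMapRank.r R _ rkR R S _ _ _ (Module.compHom S π)
        (@LinearMap.mk R R _ _ (RingHom.id R) R S _ _ _ (Module.compHom S π)
          ⟨⇑π, fun x y => π.map_add x y⟩ (fun r x => by exact π.map_mul r x)) = 1)
    (hid : @ExtendedSylvesterMapRank.r R _ rkR S S _ (Module.compHom S π) _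
        (Module.compHom S π) (@LinearMap.id R S _ _ (Module.compHom S π)) = 1) :
    ∀ (n m : ℕ) (A : Matrix (Fin n) (Fin m) R)
      (M : Type u) [AddCommGroup M] [Module R M], Module.FinitePresentation R M →
      (((Fin m → R) ⧸ LinearMap.range A.vecMulLinear) ≃ₗ[R] M) →
      @ExtendedSylvesterMapRank.r R _ rkR (MatrixCokernel S (A.map π))
          (MatrixCokernel S (A.map π)) _ (Module.compHom _ π) _ (Module.compHom _ π)
          (@LinearMap.id R (MatrixCokernel S (A.map π)) _ _
            (Module.compHom (MatrixCokernel S (A.map π)) π)) =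
        rkR.r (LinearMap.id : M →ₗ[R] M) := by
  
  intro n m A M iMa iMm hfp e
  letI sMod : Module R S := Module.compHom S π
  let πL : R →ₗ[R] S :=
    @LinearMap.mk R R _ _ (RingHom.id R) R S _ _ _ sMod
      ⟨⇑π, fun x y => π.map_add x y⟩ (fun r x => by exact π.map_mul r x)
  have hπ' : rkR.r πL = 1 := hπ
  have hid' : rkR.r (LinearMap.id : S →ₗ[R] S) = 1 := hid
  let AS : (Fin n → S) →ₗ[R] (Fin m → S) :=
    { toFun := (A.map π).vecMulLinear
      map_add' := fun x y => map_add _ x y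
      map_smul' := fun r x => map_smul (A.map π).vecMulLinear (π r) x }
  have hcomm : AS.comp (LinearMap.pi fun i => πL.comp (LinearMap.proj i)) =
      (LinearMap.pi fun i => πL.comp (LinearMap.proj i)).comp A.vecMulLinear := by
    apply LinearMap.ext; intro v
    funext j
    show ((A.map π).vecMulLinear (fun i => π (v i))) j = π ((A.vecMulLinear v) j)
    simp [Matrix.vecMulLinear_apply, Matrix.vecMul, dotProduct, Matrix.map_apply,
      map_sum]
  have hkey := sylvester_key rkR S πL hπ' hid' n m A.vecMulLinear AS hcomm
  let K := LinearMap.range (A.map π).vecMulLinear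
  letI qMod : Module R (MatrixCokernel S (A.map π)) :=
    Module.compHom (MatrixCokernel S (A.map π)) π
  let mkS : (Fin m → S) →ₗ[R] MatrixCokernel S (A.map π) :=
    { toFun := K.mkQ
      map_add' := fun x y => map_add _ x y
      map_smul' := fun r x => K.mkQ.map_smul (π r) x }
  have hker : LinearMap.range AS ≤ LinearMap.ker mkS := by
    rintro x ⟨v, rfl⟩
    have h2 : mkS (AS v) = 0 := (Submodule.Quotient.mk_eq_zero K).mpr ⟨v, rfl⟩
    exact LinearMap.mem_ker.mpr h2
  have hker2 : LinearMap.ker mkS ≤ LinearMap.range AS := by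
    intro x hx
    have h2 : mkS x = 0 := LinearMap.mem_ker.mp hx
    have h3 : x ∈ K := (Submodule.Quotient.mk_eq_zero K).mp h2
    obtain ⟨v, hv⟩ := h3
    exact ⟨v, hv⟩
  have hsurj : Function.Surjective (Submodule.liftQ (LinearMap.range AS) mkS hker) := by
    intro q
    obtain ⟨x, hx⟩ := Submodule.Quotient.mk_surjective K q
    exact ⟨Submodule.Quotient.mk x, by rw [Submodule.liftQ_apply]; exact hx⟩
  have e1 : ((Fin m → S) ⧸ LinearMap.range AS) ≃ₗ[R] MatrixCokernel S (A.map π) :=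
    LinearEquiv.ofBijective _
      ⟨LinearMap.ker_eq_bot.mp (Submodule.ker_liftQ_eq_bot _ _ _ hker2), hsurj⟩
  exact ((rkR.r_id_congr e1).trans hkey).trans (rkR.r_id_congr e).symm
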